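/- Let X ⊂ 𝔸ⁿ be an 𝔽_q-variety of dimension r and degree d < q, with irreducible 𝔽_q-components X₁, …, X_m of which X₁, …, X_σ are the essential components (absolutely irreducible of dimension r), and let U ⊆ 𝔽_qⁿ be nonempty. Then Δ = #X(𝔽_q) · #U − #(X(𝔽_q) + U) satisfies Δ ≤ #U · ( Σ_{0 ≠ u ∈ U−U} Σ_{1 ≤ i,j ≤ σ} #(X_i(𝔽_q) ∩ X_j^{(u)}(𝔽_q)) + 2(#(U−U) − 1) Σ_{σ < i ≤ m} #X_i(𝔽_q) ). -/

import Mathlib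

open Pointwise

section Defs

variable (F : Type*) [Field F] {K : Type*} [Field K] [Algebra F K] {n : ℕ}

/-- `X` is an `F`-variety in `𝔸ⁿ(K)` (`K` the ambient algebraically closed field):
a nonempty common zero set of a family of polynomials with coefficients in `F`. -/
def IsFVar (X : Set (Fin n → K)) : Prop :=
  X.Nonempty ∧ ∃ S : Set (MvPolynomial (Fin n) F),
    X = {x | ∀ f ∈ S, MvPolynomial.aeval x f = 0}

/-- `X` is an irreducible `F`-variety: it is an `F`-variety which cannot be written as a
union of two proper `F`-subvarieties. -/
def IsIrrFVar (X : Set (Fin n → K)) : Prop :=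
  IsFVar F X ∧ ∀ Y Z : Set (Fin n → K),
    IsFVar F Y → IsFVar F Z → X = Y ∪ Z → X = Y ∨ X = Z

/-- The set `X(F)` of `F`-rational points of `X ⊆ 𝔸ⁿ(K)`, regarded as a subset of `Fⁿ`. -/
def ratPts (X : Set (Fin n → K)) : Set (Fin n → F) :=
  {a | (fun i => algebraMap F K (a i)) ∈ X}

/-- `X` shifted by `u ∈ Fⁿ`: `X⁽ᵘ⁾ = {a + u : a ∈ X}`. -/
def shiftV (u : Fin n → F) (X : Set (Fin n → K)) : Set (Fin n → K) :=
  (fun a => a + fun i => algebraMap F K (u i)) '' X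

/-- `X` contains a strictly increasing chain of length `r` of nonempty irreducible
`F`-varieties. -/
def VarDimGE (X : Set (Fin n → K)) (r : ℕ) : Prop :=
  ∃ c : Fin (r + 1) → Set (Fin n → K),
    StrictMono c ∧ ∀ i, IsIrrFVar F (c i) ∧ c i ⊆ X

/-- `X` has dimension `r`: the longest chain of nonempty irreducible `F`-varieties
contained in `X` has length `r`. -/
def HasVarDim (X : Set (Fin n → K)) (r : ℕ) : Prop :=
  VarDimGE F X r ∧ ¬ VarDimGE F X (r + 1)

/-- `L ⊆ 𝔸ⁿ(K)` is an affine-linear subspace of dimension `m`. -/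
def IsAffSub {K : Type*} [Field K] {n : ℕ} (L : Set (Fin n → K)) (m : ℕ) : Prop :=
  ∃ (W : Submodule K (Fin n → K)) (b : Fin n → K),
    Module.finrank K ↥W = m ∧ L = (fun w => b + w) '' (W : Set (Fin n → K))

/-- Degree of an (irreducible) variety `X` of dimension `r`: the maximal number of points
lying in an intersection `X ∩ L` with a linear space `L` of codimension `r` for which
`X ∩ L` is finite. -/
def HasIrrDeg (X : Set (Fin n → K)) (d : ℕ) : Prop :=
  ∃ r, HasVarDim F X r ∧
    (∃ L : Set (Fin n → K), IsAffSub L (n - r) ∧ (X ∩ L).Finite ∧ (X ∩ L).ncard = d) ∧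
    ∀ L : Set (Fin n → K), IsAffSub L (n - r) → (X ∩ L).Finite → (X ∩ L).ncard ≤ d

/-- Degree of an `F`-variety: the sum of the degrees of the irreducible `F`-components in a
non-redundant decomposition. -/
def HasVarDeg (X : Set (Fin n → K)) (d : ℕ) : Prop :=
  ∃ (m : ℕ) (Xc : Fin m → Set (Fin n → K)) (dc : Fin m → ℕ),
    X = ⋃ i, Xc i ∧ (∀ i, IsIrrFVar F (Xc i)) ∧
    (∀ i j, i ≠ j → ¬ Xc i ⊆ Xc j) ∧
    (∀ i, HasIrrDeg F (Xc i) (dc i)) ∧ d = ∑ i, dc i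

end Defs

section Aux

open Finset

variable {V : Type*} [AddCommGroup V] [DecidableEq V]

lemma aux_key (A U : Finset V) :
    (A.card * U.card : ℤ) - ((A + U).card : ℤ) ≤
      ∑ v ∈ (U - U).erase 0, ((A ∩ A.image (· + v)).card : ℤ) * U.card := by
  classical
  set P := A ×ˢ U with hP
  have hmem : ∀ p ∈ P, p.1 + p.2 ∈ A + U := by
    intro p hp
    rw [hP, mem_product] at hp
    exact add_mem_add hp.1 hp.2
  set R : V → Finset (V × V) := fun b => P.filter (fun p => p.1 + p.2 = b) with hR
  have hsum : ∑ b ∈ A + U, (R b).card = A.card * U.card := by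
    rw [← card_product, ← hP]
    exact (card_eq_sum_card_fiberwise hmem).symm
  have hpos : ∀ b ∈ A + U, 1 ≤ (R b).card := by
    intro b hb
    rw [Finset.mem_add] at hb
    obtain ⟨a, ha, u, hu, rfl⟩ := hb
    exact card_pos.mpr ⟨(a, u), by simp [hR, hP, ha, hu]⟩
  set S := (P ×ˢ P).filter (fun p => p.1.1 + p.1.2 = p.2.1 + p.2.2 ∧ p.1 ≠ p.2) with hS
  have hSmem : ∀ p ∈ S, p.1.1 + p.1.2 ∈ A + U := by
    intro p hp
    rw [hS, mem_filter, mem_product] at hp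
    exact hmem _ hp.1.1
  have hScard : S.card = ∑ b ∈ A + U, (R b).offDiag.card := by
    rw [card_eq_sum_card_fiberwise hSmem]
    refine Finset.sum_congr rfl fun b hb => ?_
    congr 1
    ext p
    simp only [hS, hR, Finset.mem_offDiag, mem_filter, mem_product]
    constructor
    · rintro ⟨⟨⟨h1, h2⟩, h3, h4⟩, h5⟩
      exact ⟨⟨h1, h5⟩, ⟨h2, h3 ▸ h5⟩, h4⟩
    · rintro ⟨⟨h1, h5⟩, ⟨h2, h6⟩, h4⟩
      exact ⟨⟨⟨h1, h2⟩, h5.trans h6.symm, h4⟩, h5⟩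
  set T := ((U - U).erase 0).sigma (fun v => (A ∩ A.image (· + v)) ×ˢ U) with hT
  have hST : S.card ≤ T.card := by
    apply Finset.card_le_card_of_injOn (fun p => ⟨p.2.2 - p.1.2, (p.1.1, p.1.2)⟩)
    · intro p hp
      rw [hS, mem_coe, mem_filter, mem_product] at hp
      obtain ⟨⟨hp1, hp2⟩, heq, hne⟩ := hp
      rw [hP, mem_product] at hp1 hp2
      refine Finset.mem_sigma.mpr ⟨?_, ?_⟩
      · refine Finset.mem_erase.mpr ⟨?_, Finset.sub_mem_sub hp2.2 hp1.2⟩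
        intro h0
        apply hne
        have hu : p.2.2 = p.1.2 := by
          have h := sub_eq_zero.mp h0
          exact h
        have ha : p.1.1 = p.2.1 := by
          have h := heq
          rw [hu] at h
          exact add_right_cancel h
        exact Prod.ext ha hu.symm
      · refine mem_product.mpr ⟨mem_inter.mpr ⟨hp1.1, ?_⟩, hp1.2⟩
        refine mem_image.mpr ⟨p.2.1, hp2.1, ?_⟩
        rw [add_sub, ← heq, add_sub_cancel_right]
    · intro p hp q hq h
      simp only [hS, mem_coe, mem_filter] at hp hq
      obtain ⟨-, heqp, -⟩ := hp
      obtain ⟨-, heqq, -⟩ := hq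
      simp only [Sigma.mk.inj_iff, Prod.mk.injEq, heq_eq_eq] at h
      obtain ⟨hv, ha, hu⟩ := h
      have h1 : p.1 = q.1 := Prod.ext ha hu
      have hu' : p.2.2 = q.2.2 := by
        have h2 : p.2.2 - p.1.2 + p.1.2 = q.2.2 - q.1.2 + q.1.2 := by rw [hv, hu]
        simpa using h2
      have ha' : p.2.1 = q.2.1 := by
        have hp' : p.2.1 = p.1.1 + p.1.2 - p.2.2 := by rw [heqp]; abel
        have hq' : q.2.1 = q.1.1 + q.1.2 - q.2.2 := by rw [heqq]; abel
        rw [hp', hq', ha, hu, hu']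
      exact Prod.ext h1 (Prod.ext ha' hu')
  have hT' : (T.card : ℤ)
      = ∑ v ∈ (U - U).erase 0, ((A ∩ A.image (· + v)).card : ℤ) * U.card := by
    rw [hT, Finset.card_sigma]
    push_cast
    refine Finset.sum_congr rfl fun v _ => ?_
    rw [card_product]
    push_cast
    ring
  calc (A.card * U.card : ℤ) - ((A + U).card : ℤ)
      = ∑ b ∈ A + U, (((R b).card : ℤ) - 1) := by
        rw [Finset.sum_sub_distrib, Finset.sum_const, nsmul_eq_mul, mul_one,
          ← Nat.cast_sum, hsum]
        push_cast
        ring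
    _ ≤ ∑ b ∈ A + U, ((R b).offDiag.card : ℤ) := by
        refine Finset.sum_le_sum fun b hb => ?_
        have h1 : (1 : ℤ) ≤ (R b).card := by exact_mod_cast hpos b hb
        rw [Finset.offDiag_card]
        have h2 : (R b).card ≤ (R b).card * (R b).card :=
          Nat.le_mul_of_pos_left _ (hpos b hb)
        rw [Nat.cast_sub h2]
        push_cast
        nlinarith
    _ = (S.card : ℤ) := by rw [hScard]; push_cast; ring
    _ ≤ (T.card : ℤ) := by exact_mod_cast hST
    _ = _ := hT'

lemma aux_split {m σ : ℕ} (A : Finset V) (Ai : Fin m → Finset V)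
    (hA : A = Finset.univ.biUnion Ai) (v : V) :
    ((A ∩ A.image (· + v)).card : ℤ) ≤
      (∑ i ∈ Finset.univ.filter (fun i : Fin m => (i : ℕ) < σ),
        ∑ j ∈ Finset.univ.filter (fun j : Fin m => (j : ℕ) < σ),
          ((Ai i ∩ (Ai j).image (· + v)).card : ℤ))
      + 2 * ∑ i ∈ Finset.univ.filter (fun i : Fin m => σ ≤ (i : ℕ)), ((Ai i).card : ℤ) := by
  classical
  set filt := Finset.univ.filter (fun i : Fin m => (i : ℕ) < σ) with hfilt
  set nfilt := Finset.univ.filter (fun i : Fin m => σ ≤ (i : ℕ)) with hnfilt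
  set B1 := (filt ×ˢ filt).biUnion (fun p => Ai p.1 ∩ (Ai p.2).image (· + v)) with hB1
  set B2 := nfilt.biUnion Ai with hB2
  set B3 := nfilt.biUnion (fun j => (Ai j).image (· + v)) with hB3
  have hsub : A ∩ A.image (· + v) ⊆ B1 ∪ B2 ∪ B3 := by
    intro x hx
    rw [mem_inter] at hx
    obtain ⟨hx1, hx2⟩ := hx
    rw [hA, mem_biUnion] at hx1
    obtain ⟨i, -, hi⟩ := hx1
    rw [mem_image] at hx2
    obtain ⟨y, hy, hyx⟩ := hx2
    rw [hA, mem_biUnion] at hy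
    obtain ⟨j, -, hj⟩ := hy
    by_cases hiσ : (i : ℕ) < σ
    · by_cases hjσ : (j : ℕ) < σ
      · refine mem_union_left _ (mem_union_left _ ?_)
        rw [hB1, mem_biUnion]
        exact ⟨(i, j), mem_product.mpr ⟨mem_filter.mpr ⟨mem_univ _, hiσ⟩,
          mem_filter.mpr ⟨mem_univ _, hjσ⟩⟩,
          mem_inter.mpr ⟨hi, mem_image.mpr ⟨y, hj, hyx⟩⟩⟩
      · refine mem_union_right _ ?_
        rw [hB3, mem_biUnion]
        exact ⟨j, mem_filter.mpr ⟨mem_univ _, le_of_not_gt hjσ⟩, mem_image.mpr ⟨y, hj, hyx⟩⟩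
    · refine mem_union_left _ (mem_union_right _ ?_)
      rw [hB2, mem_biUnion]
      exact ⟨i, mem_filter.mpr ⟨mem_univ _, le_of_not_gt hiσ⟩, hi⟩
  have h1 : (A ∩ A.image (· + v)).card ≤ B1.card + B2.card + B3.card := by
    calc (A ∩ A.image (· + v)).card ≤ (B1 ∪ B2 ∪ B3).card := card_le_card hsub
      _ ≤ (B1 ∪ B2).card + B3.card := card_union_le _ _
      _ ≤ B1.card + B2.card + B3.card := Nat.add_le_add_right (card_union_le _ _) _
  have hb1 : B1.card ≤ ∑ i ∈ filt, ∑ j ∈ filt, (Ai i ∩ (Ai j).image (· + v)).card := by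
    calc B1.card ≤ ∑ p ∈ filt ×ˢ filt, (Ai p.1 ∩ (Ai p.2).image (· + v)).card :=
        card_biUnion_le
      _ = _ := by rw [Finset.sum_product]
  have hb2 : B2.card ≤ ∑ i ∈ nfilt, (Ai i).card := card_biUnion_le
  have hb3 : B3.card ≤ ∑ i ∈ nfilt, (Ai i).card := by
    refine le_trans card_biUnion_le (le_of_eq ?_)
    exact Finset.sum_congr rfl fun j _ => card_image_of_injective _ (add_left_injective v)
  have h2 := h1.trans (add_le_add (add_le_add hb1 hb2) hb3)
  push_cast at h2 ⊢
  linarith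

lemma ratPts_shiftV {F K : Type*} [Field F] [Field K] [Algebra F K] {n : ℕ}
    (u : Fin n → F) (Y : Set (Fin n → K)) :
    ratPts F (shiftV F u Y) = (· + u) '' ratPts F Y := by
  ext a
  simp only [ratPts, shiftV, Set.mem_image, Set.mem_setOf_eq]
  constructor
  · rintro ⟨x, hx, hxa⟩
    refine ⟨a - u, ?_, by simp⟩
    have hx' : (fun i => algebraMap F K ((a - u) i)) = x := by
      funext i
      have h := congrFun hxa i
      simp only [Pi.add_apply, Pi.sub_apply] at h ⊢
      rw [map_sub, ← h]
      ring
    rwa [hx']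
  · rintro ⟨b, hb, rfl⟩
    exact ⟨fun i => algebraMap F K (b i), hb, by funext i; simp⟩

end Aux


/-- **Theorem 3.3 (i).** Let `X ⊂ 𝔸ⁿ` be an `𝔽_q`-variety of dimension `r` and degree
`d < q`, with irreducible `𝔽_q`-components `X₁, …, X_m` of which the first `σ` are the
essential ones (absolutely irreducible of dimension `r`), and let `U ⊆ 𝔽_qⁿ` be nonempty.
Then `Δ = #X(𝔽_q)·#U − #(X(𝔽_q)+U)` is at most
`#U · (∑_{0≠u∈U−U} ∑_{i,j≤σ} #(Xᵢ(𝔽_q) ∩ Xⱼ⁽ᵘ⁾(𝔽_q)) + 2(#(U−U)−1)·∑_{σ<i≤m} #Xᵢ(𝔽_q))`. -/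
theorem stmt2 {F : Type*} [Field F] [Finite F] {n m σ r d q : ℕ}
    (hq : q = Nat.card F)
    (X : Set (Fin n → AlgebraicClosure F))
    (Xc : Fin m → Set (Fin n → AlgebraicClosure F))
    (dc : Fin m → ℕ)
    (hXvar : IsFVar F X)
    (hdecomp : X = ⋃ i, Xc i)
    (hirr : ∀ i, IsIrrFVar F (Xc i))
    (hnonred : ∀ i j, i ≠ j → ¬ Xc i ⊆ Xc j)
    (hdeg : ∀ i, HasIrrDeg F (Xc i) (dc i))
    (hd : d = ∑ i, dc i) (hdq : d < q)
    (hdim : HasVarDim F X r)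
    (hσ : σ ≤ m)
    (hess : ∀ i : Fin m, (i : ℕ) < σ →
      IsIrrFVar (AlgebraicClosure F) (Xc i) ∧ HasVarDim F (Xc i) r)
    (hness : ∀ i : Fin m, σ ≤ (i : ℕ) →
      ¬ (IsIrrFVar (AlgebraicClosure F) (Xc i) ∧ HasVarDim F (Xc i) r))
    (U : Set (Fin n → F)) (hU : U.Nonempty) :
    ((ratPts F X).ncard * U.ncard : ℤ) - ((ratPts F X + U).ncard : ℤ) ≤
      (U.ncard : ℤ) *
        ((∑ u ∈ (Set.toFinite ((U - U) \ {0})).toFinset,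
            ∑ i ∈ Finset.univ.filter (fun i : Fin m => (i : ℕ) < σ),
              ∑ j ∈ Finset.univ.filter (fun j : Fin m => (j : ℕ) < σ),
                ((ratPts F (Xc i) ∩ ratPts F (shiftV F u (Xc j))).ncard : ℤ))
          + 2 * ((U - U).ncard - 1) *
              ∑ i ∈ Finset.univ.filter (fun i : Fin m => σ ≤ (i : ℕ)),
                ((ratPts F (Xc i)).ncard : ℤ)) := by
  classical
  have hFt : Fintype F := Fintype.ofFinite F
  set A : Finset (Fin n → F) := (ratPts F X).toFinset with hA
  set Ai : Fin m → Finset (Fin n → F) := fun i => (ratPts F (Xc i)).toFinset with hAi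
  set Uf : Finset (Fin n → F) := U.toFinset with hUf
  have hAunion : A = Finset.univ.biUnion Ai := by
    ext a
    simp only [hA, hAi, Set.mem_toFinset, Finset.mem_biUnion, Finset.mem_univ, true_and,
      hdecomp]
    simp only [ratPts, Set.mem_iUnion, Set.mem_setOf_eq]
  have hXn : ((ratPts F X).ncard : ℤ) = (A.card : ℤ) := by
    rw [hA, Set.ncard_eq_toFinset_card']
  have hUn : (U.ncard : ℤ) = (Uf.card : ℤ) := by
    rw [hUf, Set.ncard_eq_toFinset_card']
  have hXU : ((ratPts F X + U).ncard : ℤ) = ((A + Uf).card : ℤ) := by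
    have hs : ratPts F X + U = ((A + Uf : Finset (Fin n → F)) : Set (Fin n → F)) := by
      rw [Finset.coe_add, hA, hUf, Set.coe_toFinset, Set.coe_toFinset]
    rw [hs, Set.ncard_coe_finset]
  have hUUset : U - U = ((Uf - Uf : Finset (Fin n → F)) : Set (Fin n → F)) := by
    rw [Finset.coe_sub, hUf, Set.coe_toFinset]
  have hUU : ((U - U).ncard : ℤ) = ((Uf - Uf).card : ℤ) := by
    rw [hUUset, Set.ncard_coe_finset]
  have hD : (Set.toFinite ((U - U) \ {0})).toFinset = (Uf - Uf).erase 0 := by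
    ext v
    simp only [Set.Finite.mem_toFinset, Set.mem_diff, Set.mem_singleton_iff, hUUset,
      Finset.mem_coe, Finset.mem_erase]
    tauto
  have h0mem : (0 : Fin n → F) ∈ Uf - Uf := by
    obtain ⟨u, hu⟩ := hU
    have hu' : u ∈ Uf := by rw [hUf, Set.mem_toFinset]; exact hu
    simpa using Finset.sub_mem_sub hu' hu'
  have hDcard : ((((Uf - Uf).erase 0).card : ℕ) : ℤ) = ((Uf - Uf).card : ℤ) - 1 := by
    rw [Finset.card_erase_of_mem h0mem,
      Nat.cast_sub (Finset.card_pos.mpr ⟨0, h0mem⟩), Nat.cast_one]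
  have hshift : ∀ (u : Fin n → F) (i j : Fin m),
      ((ratPts F (Xc i) ∩ ratPts F (shiftV F u (Xc j))).ncard : ℤ)
        = ((Ai i ∩ (Ai j).image (· + u)).card : ℤ) := by
    intro u i j
    have hset : ratPts F (Xc i) ∩ ratPts F (shiftV F u (Xc j))
        = ((Ai i ∩ (Ai j).image (· + u) : Finset (Fin n → F)) : Set (Fin n → F)) := by
      rw [ratPts_shiftV, Finset.coe_inter, Finset.coe_image]
      simp [hAi]
    rw [hset, Set.ncard_coe_finset]
  have hness : ∀ i : Fin m, ((ratPts F (Xc i)).ncard : ℤ) = ((Ai i).card : ℤ) := by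
    intro i
    simp [hAi, Set.ncard_eq_toFinset_card']
  rw [hXn, hUn, hXU, hD, hUU]
  simp only [hshift, hness]
  calc ((A.card : ℤ) * (Uf.card : ℤ)) - ((A + Uf).card : ℤ)
      ≤ ∑ v ∈ (Uf - Uf).erase 0, ((A ∩ A.image (· + v)).card : ℤ) * Uf.card := by
        have := aux_key A Uf
        push_cast at this ⊢
        exact this
    _ ≤ ∑ v ∈ (Uf - Uf).erase 0,
          (((∑ i ∈ Finset.univ.filter (fun i : Fin m => (i : ℕ) < σ),
            ∑ j ∈ Finset.univ.filter (fun j : Fin m => (j : ℕ) < σ),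
              ((Ai i ∩ (Ai j).image (· + v)).card : ℤ))
            + 2 * ∑ i ∈ Finset.univ.filter (fun i : Fin m => σ ≤ (i : ℕ)),
                ((Ai i).card : ℤ)) * (Uf.card : ℤ)) := by
        refine Finset.sum_le_sum fun v _ => ?_
        exact mul_le_mul_of_nonneg_right (aux_split (σ := σ) A Ai hAunion v)
          (by positivity)
    _ = (Uf.card : ℤ) *
          ((∑ v ∈ (Uf - Uf).erase 0,
            ∑ i ∈ Finset.univ.filter (fun i : Fin m => (i : ℕ) < σ),
              ∑ j ∈ Finset.univ.filter (fun j : Fin m => (j : ℕ) < σ),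
                ((Ai i ∩ (Ai j).image (· + v)).card : ℤ))
            + 2 * ((((Uf - Uf).erase 0).card : ℕ) : ℤ) *
                ∑ i ∈ Finset.univ.filter (fun i : Fin m => σ ≤ (i : ℕ)),
                  ((Ai i).card : ℤ)) := by
        rw [← Finset.sum_mul, Finset.sum_add_distrib, Finset.sum_const, nsmul_eq_mul]
        ring
    _ = _ := by rw [hDcard]
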